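/- Fix D ∈ ℕ. For any finite graph G with minimum degree δ, either G contains, starting from every vertex, a path of length at least D, or G has a subgraph H with at most D vertices and at least δ(δ+1)/2 edges. -/

import Mathlib

open SimpleGraph Walk Finset

private lemma getVert_inj_of_isPath {V : Type*} {G : SimpleGraph V} {a b : V} {p : G.Walk a b}
    (hp : p.IsPath) : ∀ i ≤ p.length, ∀ j ≤ p.length, p.getVert i = p.getVert j → i = j := by
  induction p with
  | nil => intro i hi j hj _; simp only [Walk.length_nil, Nat.le_zero] at hi hj; omega
  | @cons a c b h q ih =>
    intro i hi j hj heq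
    rw [Walk.cons_isPath_iff] at hp
    match i, j with
    | 0, 0 => rfl
    | 0, j+1 =>
      exfalso
      apply hp.2
      rw [Walk.mem_support_iff_exists_getVert]
      refine ⟨j, ?_, by simpa [Walk.length_cons] using hj⟩
      simpa [Walk.getVert_zero, Walk.getVert_cons_succ] using heq.symm
    | i+1, 0 =>
      exfalso
      apply hp.2
      rw [Walk.mem_support_iff_exists_getVert]
      refine ⟨i, ?_, by simpa [Walk.length_cons] using hi⟩
      simpa [Walk.getVert_zero, Walk.getVert_cons_succ] using heq
    | i+1, j+1 =>
      have := ih hp.1 i (by simpa [Walk.length_cons] using hi) j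
        (by simpa [Walk.length_cons] using hj)
        (by simpa [Walk.getVert_cons_succ] using heq)
      omega

private lemma getVert_dropUntil' {V : Type*} [DecidableEq V] {G : SimpleGraph V} {a b w : V}
    (p : G.Walk a b) (hw : w ∈ p.support) (n : ℕ) :
    (p.dropUntil w hw).getVert n = p.getVert ((p.takeUntil w hw).length + n) := by
  have h := Walk.getVert_append (p.takeUntil w hw) (p.dropUntil w hw)
    ((p.takeUntil w hw).length + n)
  rw [Walk.take_spec p hw, if_neg (by omega), Nat.add_sub_cancel_left] at h
  exact h.symm

/-- Fix `D : ℕ`. Any finite graph `G` with minimum degree `δ` either contains a path of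
length at least `D` starting at every vertex, or has a subgraph `H` on at most `D` vertices
with at least `δ(δ+1)/2` edges (stated via ordered adjacent pairs inside a vertex set `s`:
their number is twice the number of edges of the induced subgraph). -/
theorem stmt8 {V : Type*} [Fintype V] [DecidableEq V] [Nonempty V]
    (G : SimpleGraph V) [DecidableRel G.Adj] (D : ℕ) :
    (∀ v : V, ∃ (u : V) (p : G.Walk v u), p.IsPath ∧ D ≤ p.length) ∨
    (∃ s : Finset V, s.card ≤ D ∧
      G.minDegree * (G.minDegree + 1) ≤
        (Finset.univ.filter (fun q : V × V => G.Adj q.1 q.2 ∧ q.1 ∈ s ∧ q.2 ∈ s)).card) := by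
  rw [or_iff_not_imp_left]
  intro hL
  push_neg at hL
  obtain ⟨v, hv⟩ := hL
  set δ := G.minDegree with hδ
  -- the set of lengths of paths starting at v
  set S : Set ℕ := {n | ∃ (u : V) (p : G.Walk v u), p.IsPath ∧ p.length = n} with hSdef
  have hS0 : (0 : ℕ) ∈ S := ⟨v, Walk.nil, Walk.IsPath.nil, rfl⟩
  have hSbdd : BddAbove S := by
    refine ⟨D, fun n hn => ?_⟩
    obtain ⟨u, p, hp, hl⟩ := hn
    exact (hl ▸ (hv u p hp)).le
  set k := sSup S with hk
  have hkS : k ∈ S := Nat.sSup_mem ⟨0, hS0⟩ hSbdd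
  have hmax : ∀ n ∈ S, n ≤ k := fun n hn => le_csSup hSbdd hn
  obtain ⟨u, p, hp, hlen⟩ := hkS
  have hkD : k < D := by rw [← hlen]; exact hv u p hp
  set s : Finset V := p.support.toFinset with hs
  have hscard : s.card ≤ D := by
    rw [hs, List.toFinset_card_of_nodup hp.support_nodup, Walk.length_support]
    omega
  -- maximality: any path from v of length k has all the neighbors of its endpoint on itself
  have maxEnd : ∀ (x : V) (q : G.Walk v x), q.IsPath → q.length = k →
      ∀ y, G.Adj x y → y ∈ q.support := by
    intro x q hq hql y hady
    by_contra hy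
    have hcp : (q.concat hady).IsPath := by
      rw [Walk.isPath_def, Walk.support_concat]
      rw [Walk.isPath_def] at hq
      simp [List.concat_eq_append, List.nodup_append, hq, hy]
      exact fun a ha h => hy (h ▸ ha)
    have : (q.concat hady).length ∈ S := ⟨y, q.concat hady, hcp, rfl⟩
    have := hmax _ this
    rw [Walk.length_concat] at this
    omega
  have full_u : ∀ y, G.Adj u y → y ∈ p.support := maxEnd u p hp hlen
  -- successor function along p
  set f : V → V := fun w =>
    if hw : w ∈ p.support then (p.dropUntil w hw).getVert 1 else w with hf
  set Nu : Finset V := G.neighborFinset u with hNu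
  have hNusub : ∀ w ∈ Nu, w ∈ p.support := by
    intro w hw
    rw [hNu, SimpleGraph.mem_neighborFinset] at hw
    exact full_u w hw
  have hNune : ∀ w ∈ Nu, w ≠ u := by
    intro w hw
    rw [hNu, SimpleGraph.mem_neighborFinset] at hw
    exact hw.ne'
  -- index facts
  have hgetw : ∀ (w : V) (hw : w ∈ p.support),
      p.getVert (p.takeUntil w hw).length = w := by
    intro w hw
    have := getVert_dropUntil' p hw 0
    simpa [Walk.getVert_zero] using this.symm
  have hlensplit : ∀ (w : V) (hw : w ∈ p.support),
      (p.takeUntil w hw).length + (p.dropUntil w hw).length = p.length := by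
    intro w hw
    have := congrArg Walk.length (Walk.take_spec p hw)
    rwa [Walk.length_append] at this
  have hdroplen : ∀ (w : V) (hw : w ∈ p.support), w ≠ u →
      1 ≤ (p.dropUntil w hw).length := by
    intro w hw hne
    by_contra hcon
    have h0 : (p.dropUntil w hw).length = 0 := by omega
    exact hne (Walk.eq_of_length_eq_zero h0)
  have hfval : ∀ (w : V) (hw : w ∈ p.support),
      f w = p.getVert ((p.takeUntil w hw).length + 1) := by
    intro w hw
    rw [hf]
    simp only [dif_pos hw]
    exact getVert_dropUntil' p hw 1
  -- injectivity of f on Nu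
  have hfinj : Set.InjOn f ↑Nu := by
    intro w1 hw1 w2 hw2 heq
    have hs1 := hNusub w1 hw1
    have hs2 := hNusub w2 hw2
    have h1 := hfval w1 hs1
    have h2 := hfval w2 hs2
    have hb1 : (p.takeUntil w1 hs1).length + 1 ≤ p.length := by
      have := hlensplit w1 hs1; have := hdroplen w1 hs1 (hNune w1 hw1); omega
    have hb2 : (p.takeUntil w2 hs2).length + 1 ≤ p.length := by
      have := hlensplit w2 hs2; have := hdroplen w2 hs2 (hNune w2 hw2); omega
    have heq' : p.getVert ((p.takeUntil w1 hs1).length + 1)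
        = p.getVert ((p.takeUntil w2 hs2).length + 1) := by rw [← h1, ← h2, heq]
    have := getVert_inj_of_isPath hp _ hb1 _ hb2 heq'
    have hw1' : p.getVert (p.takeUntil w1 hs1).length = w1 := hgetw w1 hs1
    have hw2' : p.getVert (p.takeUntil w2 hs2).length = w2 := hgetw w2 hs2
    rw [← hw1', ← hw2']
    congr 1
    omega
  -- rotation: each f w is the endpoint of a max-length path from v with the same support
  have hrot : ∀ w ∈ Nu, f w ∈ p.support ∧ ∀ y, G.Adj (f w) y → y ∈ p.support := by
    intro w hw
    have hsw := hNusub w hw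
    have hne := hNune w hw
    have hadj : G.Adj w u := by
      rw [hNu, SimpleGraph.mem_neighborFinset] at hw; exact hw.symm
    obtain ⟨x, ha, d', hd⟩ := Walk.exists_eq_cons_of_ne hne (p.dropUntil w hsw)
    have hfx : f w = x := by
      rw [hf]; simp only [dif_pos hsw]
      rw [hd, Walk.getVert_cons_succ, Walk.getVert_zero]
    set q : G.Walk v x :=
      (p.takeUntil w hsw).append (Walk.cons hadj d'.reverse) with hq
    have hps : p.support = (p.takeUntil w hsw).support ++ d'.support := by
      conv_lhs => rw [← Walk.take_spec p hsw]
      rw [Walk.support_append, hd, Walk.support_cons]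
      rfl
    have hqs : q.support = (p.takeUntil w hsw).support ++ d'.support.reverse := by
      rw [hq, Walk.support_append, Walk.support_cons]
      simp [Walk.support_reverse]
    have hperm : q.support.Perm p.support := by
      rw [hps, hqs]
      exact List.Perm.append_left _ (List.reverse_perm _)
    have hqpath : q.IsPath := by
      rw [Walk.isPath_def]
      rw [hperm.nodup_iff]
      exact hp.support_nodup
    have hqlen : q.length = k := by
      have h1 := hlensplit w hsw
      have h2 : (p.dropUntil w hsw).length = d'.length + 1 := by
        rw [hd, Walk.length_cons]
      rw [hq, Walk.length_append, Walk.length_cons, Walk.length_reverse]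
      omega
    have hfull := maxEnd x q hqpath hqlen
    constructor
    · rw [hfx]
      exact hperm.mem_iff.mp (Walk.end_mem_support q)
    · intro y hy
      rw [hfx] at hy
      rw [← hperm.mem_iff]
      exact hfull y hy
  -- the set of rotation endpoints
  set W0 : Finset V := Nu.image f with hW0
  have hW0card : δ ≤ W0.card := by
    rw [hW0, Finset.card_image_of_injOn hfinj, hNu,
      SimpleGraph.card_neighborFinset_eq_degree]
    exact G.minDegree_le_degree u
  obtain ⟨W', hW'sub, hW'card⟩ := Finset.exists_subset_card_eq hW0card
  have hW'prop : ∀ w ∈ W', w ∈ s ∧ ∀ y, G.Adj w y → y ∈ s := by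
    intro w hw
    have hw0 := hW'sub hw
    rw [hW0, Finset.mem_image] at hw0
    obtain ⟨a, ha, rfl⟩ := hw0
    obtain ⟨hm, hfull⟩ := hrot a ha
    refine ⟨by rwa [hs, List.mem_toFinset], fun y hy => ?_⟩
    rw [hs, List.mem_toFinset]
    exact hfull y hy
  -- counting
  set T : Finset (V × V) :=
    Finset.univ.filter (fun q : V × V => G.Adj q.1 q.2 ∧ q.1 ∈ s ∧ q.2 ∈ s) with hT
  refine ⟨s, hscard, ?_⟩
  set A : Finset (V × V) := T.filter (fun q => q.1 ∈ W') with hA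
  set B : Finset (V × V) := T.filter (fun q => q.1 ∉ W' ∧ q.2 ∈ W') with hB
  -- lower bound for A
  set A' : Finset (V × V) :=
    W'.biUnion (fun w => (G.neighborFinset w).image (fun y => (w, y))) with hA'
  have hA'sub : A' ⊆ A := by
    intro q hq
    rw [hA', Finset.mem_biUnion] at hq
    obtain ⟨w, hw, hq⟩ := hq
    rw [Finset.mem_image] at hq
    obtain ⟨y, hy, rfl⟩ := hq
    rw [SimpleGraph.mem_neighborFinset] at hy
    obtain ⟨hws, hfull⟩ := hW'prop w hw
    rw [hA, Finset.mem_filter, hT, Finset.mem_filter]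
    exact ⟨⟨Finset.mem_univ _, hy, hws, hfull y hy⟩, hw⟩
  have hA'card : δ * δ ≤ A'.card := by
    rw [hA', Finset.card_biUnion]
    · calc δ * δ = W'.card * δ := by rw [hW'card]
        _ = ∑ _w ∈ W', δ := by rw [Finset.sum_const, smul_eq_mul]
        _ ≤ ∑ w ∈ W', ((G.neighborFinset w).image (fun y => (w, y))).card := by
            refine Finset.sum_le_sum fun w _ => ?_
            rw [Finset.card_image_of_injective _ (fun a b hab => (Prod.mk.injEq _ _ _ _).mp hab |>.2),
              SimpleGraph.card_neighborFinset_eq_degree]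
            exact G.minDegree_le_degree w
    · intro w1 h1 w2 h2 hne
      rw [Function.onFun, Finset.disjoint_left]
      intro q hq1 hq2
      rw [Finset.mem_image] at hq1 hq2
      obtain ⟨y1, _, rfl⟩ := hq1
      obtain ⟨y2, _, heq⟩ := hq2
      exact hne ((Prod.mk.injEq _ _ _ _).mp heq.symm).1
  -- lower bound for B
  have hout : ∀ w ∈ W', (G.neighborFinset w \ W').Nonempty := by
    intro w hw
    rw [Finset.sdiff_nonempty]
    intro hsub
    have hwn : w ∉ G.neighborFinset w := by
      rw [SimpleGraph.mem_neighborFinset]; exact G.irrefl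
    have hsub' : G.neighborFinset w ⊆ W'.erase w := by
      intro y hy
      rw [Finset.mem_erase]
      exact ⟨fun h => hwn (h ▸ hy), hsub hy⟩
    have h1 : δ ≤ (G.neighborFinset w).card := by
      rw [SimpleGraph.card_neighborFinset_eq_degree]; exact G.minDegree_le_degree w
    have h2 := Finset.card_le_card hsub'
    rw [Finset.card_erase_of_mem hw, hW'card] at h2
    have hδ1 : 1 ≤ δ := by
      rcases Nat.eq_zero_or_pos δ with h | h
      · exfalso; rw [← hW'card, Finset.card_eq_zero] at h; simp [h] at hw
      · exact h
    omega
  set g : V → V := fun w =>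
    if h : (G.neighborFinset w \ W').Nonempty then h.choose else w with hg
  have hgspec : ∀ w ∈ W', g w ∈ G.neighborFinset w \ W' := by
    intro w hw
    have h := hout w hw
    rw [hg]
    simp only [dif_pos h]
    exact h.choose_spec
  set B' : Finset (V × V) := W'.image (fun w => (g w, w)) with hB'
  have hB'sub : B' ⊆ B := by
    intro q hq
    rw [hB', Finset.mem_image] at hq
    obtain ⟨w, hw, rfl⟩ := hq
    have hspec := hgspec w hw
    rw [Finset.mem_sdiff, SimpleGraph.mem_neighborFinset] at hspec
    obtain ⟨hws, hfull⟩ := hW'prop w hw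
    rw [hB, Finset.mem_filter, hT, Finset.mem_filter]
    exact ⟨⟨Finset.mem_univ _, hspec.1.symm, hfull _ hspec.1, hws⟩, hspec.2, hw⟩
  have hB'card : δ ≤ B'.card := by
    rw [hB', Finset.card_image_of_injOn, hW'card]
    intro w1 _ w2 _ heq
    exact ((Prod.mk.injEq _ _ _ _).mp heq).2
  -- assemble
  have hdisj : Disjoint A B := by
    rw [Finset.disjoint_left]
    intro q hqA hqB
    rw [hA, Finset.mem_filter] at hqA
    rw [hB, Finset.mem_filter] at hqB
    exact hqB.2.1 hqA.2
  calc δ * (δ + 1) = δ * δ + δ := by ring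
    _ ≤ A.card + B.card :=
      Nat.add_le_add (le_trans hA'card (Finset.card_le_card hA'sub))
        (le_trans hB'card (Finset.card_le_card hB'sub))
    _ = (A ∪ B).card := (Finset.card_union_of_disjoint hdisj).symm
    _ ≤ T.card := Finset.card_le_card
        (Finset.union_subset (Finset.filter_subset _ _) (Finset.filter_subset _ _))
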